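/- Let α, β ∈ ℍ with β ≠ conj(α) and suppose α and β do not both lie in one sphere x + y𝕊 (that is, Re α ≠ Re β or |Im α| ≠ |Im β|). Then the quaternionic polynomial P(q) = q² - q(α + β) + αβ has exactly two roots in ℍ, namely α and (β - conj(α))⁻¹ β (β - conj(α)). -/

import Mathlib

open Quaternion

private lemma qchar (α : ℍ[ℝ]) : α * α = ((2*α.re : ℝ) : ℍ[ℝ]) * α - ((normSq α : ℝ) : ℍ[ℝ]) := by
  ext <;>
    simp [Quaternion.re_mul, Quaternion.imI_mul, Quaternion.imJ_mul, Quaternion.imK_mul,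
      Quaternion.normSq_def', pow_two, Quaternion.re_coe, Quaternion.imI_coe,
      Quaternion.imJ_coe, Quaternion.imK_coe] <;> ring

private lemma qkey1 (α β : ℍ[ℝ]) :
    β^2*(β - star α) - β*((β - star α)*(α+β)) + (β - star α)*(α*β) = 0 := by
  ext <;>
    simp [pow_two, Quaternion.re_mul, Quaternion.imI_mul, Quaternion.imJ_mul,
      Quaternion.imK_mul] <;> ring

private lemma qkey2 (α β : ℍ[ℝ]) :
    (β - star α)*α + (β - star α)*β - α*(β - star α) = β*(β - star α) := by
  ext <;>
    simp [Quaternion.re_mul, Quaternion.imI_mul, Quaternion.imJ_mul,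
      Quaternion.imK_mul] <;> ring

private lemma qkey3 (α β : ℍ[ℝ]) :
    β*(β - star α) - (β - star α)*α
      = β*β - ((2*α.re : ℝ) : ℍ[ℝ])*β + ((normSq α : ℝ) : ℍ[ℝ]) := by
  ext <;>
    simp [Quaternion.re_mul, Quaternion.imI_mul, Quaternion.imJ_mul,
      Quaternion.imK_mul, Quaternion.normSq_def', pow_two, Quaternion.re_coe,
      Quaternion.imI_coe, Quaternion.imJ_coe, Quaternion.imK_coe] <;> ring

/-- The "characteristic polynomial of α" does not vanish at β when α, β are in
different spheres. -/
private lemma qQ_ne_zero (α β : ℍ[ℝ]) (hsph : α.re ≠ β.re ∨ ‖α.im‖ ≠ ‖β.im‖) :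
    β*β - ((2*α.re : ℝ) : ℍ[ℝ])*β + ((normSq α : ℝ) : ℍ[ℝ]) ≠ 0 := by
  intro h
  rw [Quaternion.ext_iff] at h
  simp only [Quaternion.re_add, Quaternion.imI_add, Quaternion.imJ_add, Quaternion.imK_add,
    Quaternion.re_sub, Quaternion.imI_sub, Quaternion.imJ_sub, Quaternion.imK_sub,
    Quaternion.re_mul, Quaternion.imI_mul, Quaternion.imJ_mul, Quaternion.imK_mul,
    Quaternion.re_coe, Quaternion.imI_coe, Quaternion.imJ_coe, Quaternion.imK_coe,
    Quaternion.re_zero, Quaternion.imI_zero, Quaternion.imJ_zero, Quaternion.imK_zero,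
    Quaternion.normSq_def'] at h
  obtain ⟨h1, h2, h3, h4⟩ := h
  rcases eq_or_ne α.re β.re with hr | hr
  · have him : normSq α.im = normSq β.im := by
      simp only [Quaternion.normSq_def', Quaternion.re_im, Quaternion.imI_im,
        Quaternion.imJ_im, Quaternion.imK_im]
      nlinarith [h1, hr]
    have hn : ‖α.im‖ = ‖β.im‖ := by
      have := him
      rw [Quaternion.normSq_eq_norm_mul_self, Quaternion.normSq_eq_norm_mul_self] at this
      exact (mul_self_inj (norm_nonneg _) (norm_nonneg _)).mp this
    rcases hsph with h | h
    · exact h hr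
    · exact h hn
  · have hI : β.imI = 0 := by
      rcases mul_eq_zero.mp (show (β.re - α.re) * (2 * β.imI) = 0 by nlinarith [h2]) with h | h
      · exact absurd (by linarith : β.re = α.re) (Ne.symm hr)
      · linarith
    have hJ : β.imJ = 0 := by
      rcases mul_eq_zero.mp (show (β.re - α.re) * (2 * β.imJ) = 0 by nlinarith [h3]) with h | h
      · exact absurd (by linarith : β.re = α.re) (Ne.symm hr)
      · linarith
    have hK : β.imK = 0 := by
      rcases mul_eq_zero.mp (show (β.re - α.re) * (2 * β.imK) = 0 by nlinarith [h4]) with h | h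
      · exact absurd (by linarith : β.re = α.re) (Ne.symm hr)
      · linarith
    have : α.re = β.re := by nlinarith [h1, sq_nonneg (β.re - α.re)]
    exact hr this

/-- If `α, β` do not lie in a common sphere `x + y𝕊`, then `P(q) = q² - q(α+β) + αβ`
has exactly the two distinct roots `α` and `(β - conj α)⁻¹ β (β - conj α)`. -/
theorem two_roots_distinct_spheres (α β : ℍ[ℝ]) (hne : β ≠ star α)
    (hsph : α.re ≠ β.re ∨ ‖α.im‖ ≠ ‖β.im‖) :
    {q : ℍ[ℝ] | q ^ 2 - q * (α + β) + α * β = 0} =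
      {α, (β - star α)⁻¹ * β * (β - star α)} ∧
    α ≠ (β - star α)⁻¹ * β * (β - star α) := by
  set u : ℍ[ℝ] := β - star α with hu_def
  have hu : u ≠ 0 := sub_ne_zero.mpr hne
  set β' : ℍ[ℝ] := u⁻¹ * β * u with hb'_def
  have hub : u * β' = β * u := by
    rw [hb'_def, ← mul_assoc, ← mul_assoc, mul_inv_cancel₀ hu, one_mul]
  have hstar : star α = ((2*α.re : ℝ) : ℍ[ℝ]) - α :=
    eq_sub_of_add_eq' (Quaternion.self_add_star' α)
  have hQne := qQ_ne_zero α β hsph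
  -- distinctness
  have hdist : α ≠ β' := by
    intro h
    apply hQne
    have h1 : u * α = β * u := by rw [h]; exact hub
    rw [← qkey3, ← hu_def, h1, sub_self]
  -- β' is a root
  have hroot2 : β' ^ 2 - β' * (α + β) + α * β = 0 := by
    have h3 : u * β' ^ 2 = β ^ 2 * u := by
      rw [pow_two, pow_two, ← mul_assoc, hub, mul_assoc, hub, ← mul_assoc]
    have h2 : u * (β' ^ 2 - β' * (α + β) + α * β) = 0 := by
      rw [mul_add, mul_sub, h3, ← mul_assoc, hub, mul_assoc]
      have := qkey1 α β
      rw [← hu_def] at this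
      exact this
    exact (mul_eq_zero.mp h2).resolve_left hu
  refine ⟨?_, hdist⟩
  ext q
  simp only [Set.mem_setOf_eq, Set.mem_insert_iff, Set.mem_singleton_iff]
  constructor
  · intro hq0
    by_cases hqα : q = α
    · exact Or.inl hqα
    right
    have hv : q - α ≠ 0 := sub_ne_zero.mpr hqα
    set w : ℍ[ℝ] := α + β - q with hw_def
    clear_value w
    -- (q - α) * w = α * (q - α)
    have hvw : (q - α) * w = α * (q - α) := by
      have h1 : (q - α) * (α + β - q) - α * (q - α) = -(q ^ 2 - q * (α + β) + α * β) := by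
        noncomm_ring
      rw [hq0, neg_zero, sub_eq_zero] at h1
      rw [hw_def]; exact h1
    -- char poly of w
    have hwchar : w * w = ((2*α.re : ℝ) : ℍ[ℝ]) * w - ((normSq α : ℝ) : ℍ[ℝ]) := by
      apply mul_left_cancel₀ hv
      have c1 : (q - α) * (w * w) = (α * α) * (q - α) := by
        rw [← mul_assoc, hvw, mul_assoc, hvw, ← mul_assoc]
      have c2 : (q - α) * (((2*α.re : ℝ) : ℍ[ℝ]) * w - ((normSq α : ℝ) : ℍ[ℝ]))
          = (α * α) * (q - α) := by
        calc (q - α) * (((2*α.re : ℝ) : ℍ[ℝ]) * w - ((normSq α : ℝ) : ℍ[ℝ]))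
            = ((q - α) * ((2*α.re : ℝ) : ℍ[ℝ])) * w - (q - α) * ((normSq α : ℝ) : ℍ[ℝ]) := by
              rw [mul_sub, ← mul_assoc]
          _ = (((2*α.re : ℝ) : ℍ[ℝ]) * (q - α)) * w
                - ((normSq α : ℝ) : ℍ[ℝ]) * (q - α) := by
              rw [Quaternion.coe_commutes (2*α.re) (q - α),
                Quaternion.coe_commutes (normSq α) (q - α)]
          _ = ((2*α.re : ℝ) : ℍ[ℝ]) * ((q - α) * w)
                - ((normSq α : ℝ) : ℍ[ℝ]) * (q - α) := by rw [mul_assoc]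
          _ = ((2*α.re : ℝ) : ℍ[ℝ]) * (α * (q - α))
                - ((normSq α : ℝ) : ℍ[ℝ]) * (q - α) := by rw [hvw]
          _ = (((2*α.re : ℝ) : ℍ[ℝ]) * α - ((normSq α : ℝ) : ℍ[ℝ])) * (q - α) := by
              rw [sub_mul, mul_assoc]
          _ = (α * α) * (q - α) := by rw [← qchar]
      rw [c1, c2]
    -- u * w = α * u
    have hkey3 : u * w = α * u := by
      have hv2 : q - α = β - w := by rw [hw_def]; abel
      have e1 : β * w - w * w = α * β - α * w := by
        have h := hvw
        rw [hv2, sub_mul, mul_sub] at h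
        exact h
      have e1' : β * w = α * β - α * w + w * w := by
        rw [← e1]; abel
      have e2 : α * u = α * β - ((normSq α : ℝ) : ℍ[ℝ]) := by
        rw [hu_def, mul_sub, Quaternion.self_mul_star]
      calc u * w = β * w - (((2*α.re : ℝ) : ℍ[ℝ]) - α) * w := by rw [hu_def, hstar, sub_mul]
        _ = β * w - ((2*α.re : ℝ) : ℍ[ℝ]) * w + α * w := by rw [sub_mul]; abel
        _ = (α * β - α * w + w * w) - ((2*α.re : ℝ) : ℍ[ℝ]) * w + α * w := by rw [e1']
        _ = α * β - ((normSq α : ℝ) : ℍ[ℝ]) := by rw [hwchar]; abel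
        _ = α * u := e2.symm
    -- conclude q = β'
    have hq_eq : u * q = β * u := by
      have h5 : u * q = u * α + u * β - u * w := by rw [hw_def]; noncomm_ring
      rw [h5, hkey3]
      have := qkey2 α β
      rw [← hu_def] at this
      exact this
    rw [hb'_def, mul_assoc, ← hq_eq, ← mul_assoc, inv_mul_cancel₀ hu, one_mul]
  · rintro (rfl | rfl)
    · noncomm_ring
    · exact hroot2
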